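/- Let C_V assign to each (q, v) ∈ ℝᵐ × ℝᵐ a linear subspace C_V(q, v) ⊆ ℝᵐ, and let L : ℝᵐ × ℝᵐ → ℝ be twice continuously differentiable. Suppose q : ℝ → ℝᵐ is a C² curve such that for every t: (i) q̇(t) ∈ C_V(q(t), q̇(t)), and (ii) ⟨(d/dt)(∂L/∂v)(q(t), q̇(t)) − (∂L/∂q)(q(t), q̇(t)), w⟩ = 0 for all w ∈ C_V(q(t), q̇(t)). Then the energy t ↦ E(q(t), q̇(t)) := ⟨(∂L/∂v)(q(t), q̇(t)), q̇(t)⟩ − L(q(t), q̇(t)) is constant, for any choice of the variational constraint C_V. -/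

import Mathlib

open scoped RealInnerProductSpace

noncomputable section

/-- `ℝᵐ` with the Euclidean inner product. -/
abbrev E (m : ℕ) : Type := EuclideanSpace ℝ (Fin m)

/-- Gradient of `L` in its first argument `q`. -/
noncomputable def gQ {m : ℕ} (L : E m → E m → ℝ) (q v : E m) : E m :=
  gradient (fun x => L x v) q

/-- Gradient of `L` in its second argument `v`. -/
noncomputable def gV {m : ℕ} (L : E m → E m → ℝ) (q v : E m) : E m :=
  gradient (fun y => L q y) v

open InnerProductSpace in
/-- energy conservation along solutions of the Lagrange-d'Alembert
equations for constraints of the thermodynamic type. -/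
theorem statement1 {m : ℕ} (CV : E m → E m → Submodule ℝ (E m))
    (L : E m → E m → ℝ) (hL : ContDiff ℝ 2 (Function.uncurry L))
    (q : ℝ → E m) (hq : ContDiff ℝ 2 q)
    (h1 : ∀ t : ℝ, deriv q t ∈ CV (q t) (deriv q t))
    (h2 : ∀ t : ℝ, ∀ w ∈ CV (q t) (deriv q t),
      ⟪deriv (fun s => gV L (q s) (deriv q s)) t - gQ L (q t) (deriv q t), w⟫ = 0) :
    ∀ t₁ t₂ : ℝ,
      ⟪gV L (q t₁) (deriv q t₁), deriv q t₁⟫ - L (q t₁) (deriv q t₁) =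
      ⟪gV L (q t₂) (deriv q t₂), deriv q t₂⟫ - L (q t₂) (deriv q t₂) := by
  set f := Function.uncurry L with hf
  have hLd : Differentiable ℝ f := hL.differentiable two_ne_zero
  -- partial gradients via the full Fréchet derivative
  have hgV : ∀ p : E m × E m,
      gV L p.1 p.2 = (toDual ℝ (E m)).symm
        ((fderiv ℝ f p).comp (ContinuousLinearMap.inr ℝ (E m) (E m))) := by
    intro p
    have hcurve : HasFDerivAt (fun y : E m => (p.1, y))
        (ContinuousLinearMap.inr ℝ (E m) (E m)) p.2 :=
      (hasFDerivAt_const p.1 p.2).prodMk (hasFDerivAt_id p.2)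
    have hcomp : HasFDerivAt (fun y => L p.1 y)
        ((fderiv ℝ f p).comp (ContinuousLinearMap.inr ℝ (E m) (E m))) p.2 :=
      by have := (hLd p).hasFDerivAt.comp p.2 hcurve; exact this
    rw [gV, gradient, hcomp.fderiv]
  have hgQ : ∀ p : E m × E m,
      gQ L p.1 p.2 = (toDual ℝ (E m)).symm
        ((fderiv ℝ f p).comp (ContinuousLinearMap.inl ℝ (E m) (E m))) := by
    intro p
    have hcurve : HasFDerivAt (fun x : E m => (x, p.2))
        (ContinuousLinearMap.inl ℝ (E m) (E m)) p.1 :=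
      (hasFDerivAt_id p.1).prodMk (hasFDerivAt_const p.2 p.1)
    have hcomp : HasFDerivAt (fun x => L x p.2)
        ((fderiv ℝ f p).comp (ContinuousLinearMap.inl ℝ (E m) (E m))) p.1 :=
      by have := (hLd p).hasFDerivAt.comp p.1 hcurve; exact this
    rw [gQ, gradient, hcomp.fderiv]
  have hVinner : ∀ (p : E m × E m) (w : E m),
      ⟪gV L p.1 p.2, w⟫ = fderiv ℝ f p (0, w) := by
    intro p w
    rw [hgV p, toDual_symm_apply]; rfl
  have hQinner : ∀ (p : E m × E m) (w : E m),
      ⟪gQ L p.1 p.2, w⟫ = fderiv ℝ f p (w, 0) := by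
    intro p w
    rw [hgQ p, toDual_symm_apply]; rfl
  -- regularity
  have hq1 : ContDiff ℝ 1 q := hq.of_le one_le_two
  have hq' : ContDiff ℝ 1 (deriv q) := by
    have h := (hq.fderiv_right (m := 1) le_rfl).clm_apply (contDiff_const (c := (1:ℝ)))
    have : deriv q = fun t => fderiv ℝ q t 1 := funext fun t => (fderiv_apply_one_eq_deriv).symm
    rw [this]; exact h
  have hcurve : ContDiff ℝ 1 (fun t => (q t, deriv q t)) := hq1.prodMk hq'
  have hfd : ContDiff ℝ 1 (fun p : E m × E m => fderiv ℝ f p) :=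
    hL.fderiv_right (m := 1) le_rfl
  have hg : ContDiff ℝ 1 (fun t => gV L (q t) (deriv q t)) := by
    have heq : (fun t => gV L (q t) (deriv q t)) = fun t =>
        (toDual ℝ (E m)).symm ((fderiv ℝ f (q t, deriv q t)).comp
          (ContinuousLinearMap.inr ℝ (E m) (E m))) :=
      funext fun t => hgV (q t, deriv q t)
    rw [heq]
    exact (toDual ℝ (E m)).symm.contDiff.comp
      (((hfd.comp hcurve)).clm_comp contDiff_const)
  -- the energy has derivative zero everywhere
  set En : ℝ → ℝ :=
    fun t => ⟪gV L (q t) (deriv q t), deriv q t⟫ - L (q t) (deriv q t) with hEn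
  have hE : ∀ t, HasDerivAt En 0 t := by
    intro t
    have hqd : HasDerivAt q (deriv q t) t := (hq1.differentiable one_ne_zero t).hasDerivAt
    have hq'd : HasDerivAt (deriv q) (deriv (deriv q) t) t :=
      (hq'.differentiable one_ne_zero t).hasDerivAt
    have hgd : HasDerivAt (fun s => gV L (q s) (deriv q s))
        (deriv (fun s => gV L (q s) (deriv q s)) t) t :=
      (hg.differentiable one_ne_zero t).hasDerivAt
    set p : E m × E m := (q t, deriv q t) with hp
    set a : E m := deriv (deriv q) t with ha
    set g' : E m := deriv (fun s => gV L (q s) (deriv q s)) t with hg'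
    have hinner : HasDerivAt (fun s => ⟪gV L (q s) (deriv q s), deriv q s⟫)
        (⟪gV L (q t) (deriv q t), a⟫ + ⟪g', deriv q t⟫) t := hgd.inner ℝ hq'd
    have hLc : HasDerivAt (fun s => L (q s) (deriv q s))
        (fderiv ℝ f p (deriv q t, a)) t :=
      by have := (hLd p).hasFDerivAt.comp_hasDerivAt t (hqd.prodMk hq'd); exact this
    have hsum : HasDerivAt En
        (⟪gV L (q t) (deriv q t), a⟫ + ⟪g', deriv q t⟫ - fderiv ℝ f p (deriv q t, a)) t :=
      hinner.sub hLc
    have hsplit : fderiv ℝ f p (deriv q t, a)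
        = ⟪gQ L (q t) (deriv q t), deriv q t⟫ + ⟪gV L (q t) (deriv q t), a⟫ := by
      have : (deriv q t, a) = (deriv q t, (0:E m)) + ((0:E m), a) := by simp
      rw [this, map_add, hQinner p, hVinner p]
    have hzero : ⟪gV L (q t) (deriv q t), a⟫ + ⟪g', deriv q t⟫
        - fderiv ℝ f p (deriv q t, a) = 0 := by
      rw [hsplit]
      have h0 : ⟪g' - gQ L (q t) (deriv q t), deriv q t⟫ = 0 := h2 t (deriv q t) (h1 t)
      rw [inner_sub_left] at h0
      linarith
    rwa [hzero] at hsum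
  intro t₁ t₂
  exact is_const_of_deriv_eq_zero (fun t => (hE t).differentiableAt)
    (fun t => (hE t).deriv) t₁ t₂
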